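/- Let σ be an infinite sequence over {L,R}, let δ < 1/4 be a positive real, and let M be a positive integer. Suppose liminf_{T→∞} dens(σ^T) ≤ 1/2 − δ. Let ℓ_1, ℓ_2, … be positive integers such that for all i ≥ M, ℓ_i ∈ [(1−δ)(2^{i+1}−1), (1+δ)(2^{i+1}−1)]. Then there exists a sequence k_2, k_3, … such that for infinitely many i > M: ℓ_{i−1} + δ·2^{i−2} ≤ k_i ≤ ℓ_i and dens(σ_{{ℓ_{i−1}+1,…,k_i}}) ≤ 1/2 − δ/4. -/

import Mathlib

noncomputable section

namespace Paper

/-- The two actions of each player in the Big Match. -/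
inductive Act
  | L
  | R
deriving DecidableEq

/-- The density of the action `L` among the rounds `a+1, …, b` of the sequence
`σ` (rounds are 0-indexed, so these are the entries `σ a, …, σ (b-1)`). -/
def densBetween (σ : ℕ → Act) (a b : ℕ) : ℝ :=
  (((Finset.Ico a b).filter fun t => σ t = Act.L).card : ℝ) / ((b : ℝ) - a)

/-- The density of the action `L` in the first `T` terms of `σ`. -/
def dens (σ : ℕ → Act) (T : ℕ) : ℝ := densBetween σ 0 T

def cntL (σ : ℕ → Act) (a b : ℕ) : ℕ :=
  ((Finset.Ico a b).filter fun t => σ t = Act.L).card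

lemma densBetween_eq (σ : ℕ → Act) (a b : ℕ) :
    densBetween σ a b = (cntL σ a b : ℝ) / ((b : ℝ) - a) := rfl

lemma cntL_split (σ : ℕ → Act) {a b : ℕ} (h : a ≤ b) :
    cntL σ 0 b = cntL σ 0 a + cntL σ a b := by
  unfold cntL
  rw [← Finset.Ico_union_Ico_eq_Ico (Nat.zero_le a) h, Finset.filter_union,
    Finset.card_union_of_disjoint
      (Finset.disjoint_filter_filter (Finset.Ico_disjoint_Ico_consecutive 0 a b))]

lemma dens_le_one (σ : ℕ → Act) (T : ℕ) : dens σ T ≤ 1 := by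
  unfold dens densBetween
  rcases Nat.eq_zero_or_pos T with h | h
  · subst h; simp
  · have hT : (0:ℝ) < T := by exact_mod_cast h
    have h2 : ((Finset.Ico 0 T).filter fun t => σ t = Act.L).card ≤ T := by
      simpa [Nat.card_Ico] using
        Finset.card_filter_le (Finset.Ico 0 T) (fun t => σ t = Act.L)
    rw [show ((0:ℕ):ℝ) = 0 by norm_num, sub_zero, div_le_one hT]
    exact_mod_cast h2

lemma dens_nonneg (σ : ℕ → Act) (T : ℕ) : 0 ≤ dens σ T := by
  unfold dens densBetween
  have : ((0:ℕ):ℝ) = 0 := by norm_num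
  rw [this, sub_zero]
  positivity

set_option maxHeartbeats 2000000 in
/-- Let `σ` be an infinite sequence over `{L,R}`, let
`0 < δ < 1/4` and let `M` be a positive integer.  Suppose
`liminf_{T→∞} dens(σ^T) ≤ 1/2 - δ`, and let `ℓ i` be positive integers with
`ℓ i ∈ [(1-δ)(2^{i+1}-1), (1+δ)(2^{i+1}-1)]` for all `i ≥ M`.  Then there is a
sequence `k` such that for infinitely many `i > M`:
`ℓ (i-1) + δ 2^{i-2} ≤ k i ≤ ℓ i` and
`dens(σ over the rounds ℓ(i-1)+1, …, k i) ≤ 1/2 - δ/4`. -/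
theorem stmt12 (σ : ℕ → Act) (δ : ℝ) (hδ0 : 0 < δ) (hδ4 : δ < 1 / 4)
    (M : ℕ) (hM : 0 < M)
    (hliminf : Filter.liminf (fun T => dens σ T) Filter.atTop ≤ 1 / 2 - δ)
    (ℓ : ℕ → ℕ) (hℓ_pos : ∀ i, 0 < ℓ i)
    (hℓ : ∀ i, M ≤ i →
      (1 - δ) * ((2 : ℝ) ^ (i + 1) - 1) ≤ (ℓ i : ℝ) ∧
        (ℓ i : ℝ) ≤ (1 + δ) * ((2 : ℝ) ^ (i + 1) - 1)) :
    ∃ k : ℕ → ℕ,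
      {i : ℕ | M < i ∧ (ℓ (i - 1) : ℝ) + δ * 2 ^ (i - 2) ≤ (k i : ℝ) ∧
        k i ≤ ℓ i ∧ densBetween σ (ℓ (i - 1)) (k i) ≤ 1 / 2 - δ / 4}.Infinite := by
  classical
  set good : ℕ → Prop := fun i => M < i ∧ ∃ m : ℕ,
      (ℓ (i - 1) : ℝ) + δ * 2 ^ (i - 2) ≤ (m : ℝ) ∧
        m ≤ ℓ i ∧ densBetween σ (ℓ (i - 1)) m ≤ 1 / 2 - δ / 4 with hgood
  -- gap lemma
  have gap : ∀ j, M ≤ j → (ℓ j : ℝ) + δ * 2 ^ (j - 1) ≤ (ℓ (j + 1) : ℝ) := by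
    intro j hj
    obtain ⟨-, h1⟩ := hℓ j hj
    obtain ⟨h2, -⟩ := hℓ (j + 1) (le_trans hj (Nat.le_succ j))
    have hp : (1:ℝ) ≤ 2 ^ (j - 1) := one_le_pow₀ (by norm_num)
    have e1 : (2:ℝ) ^ (j + 1) = 4 * 2 ^ (j - 1) := by
      rw [show j + 1 = (j - 1) + 2 by omega]; ring
    have e2 : (2:ℝ) ^ (j + 1 + 1) = 8 * 2 ^ (j - 1) := by
      rw [show j + 1 + 1 = (j - 1) + 3 by omega]; ring
    rw [e1] at h1; rw [e2] at h2
    nlinarith [hp, hδ0, hδ4]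
  -- main claim
  have key : ∀ N, M ≤ N → ∃ i, N < i ∧ good i := by
    intro N hMN
    by_contra hbad
    push_neg at hbad
    -- frequently small density
    have hbd : Filter.IsBoundedUnder (· ≤ ·) Filter.atTop (fun T => dens σ T) :=
      ⟨1, Filter.eventually_map.mpr (Filter.Eventually.of_forall fun T => dens_le_one σ T)⟩
    have hfreq : ∃ᶠ T in Filter.atTop, dens σ T < 1 / 2 - 7 * δ / 8 :=
      Filter.frequently_lt_of_liminf_lt hbd.isCoboundedUnder_ge
        (lt_of_le_of_lt hliminf (by linarith))
    set C : ℝ := 20 * (δ + 4) * (ℓ N : ℝ) / (3 * δ) with hC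
    obtain ⟨T, hTB, hdT⟩ := (Filter.frequently_atTop.mp hfreq) (max (ℓ (N + 1) + 1) (⌈C⌉₊ + 1))
    have hTl1 : ℓ (N + 1) < T := by
      have := le_max_left (ℓ (N + 1) + 1) (⌈C⌉₊ + 1); omega
    have hTC : C + 1 ≤ (T : ℝ) := by
      have h1 : ⌈C⌉₊ + 1 ≤ T := le_trans (le_max_right _ _) hTB
      have h2 : C ≤ (⌈C⌉₊ : ℝ) := Nat.le_ceil C
      have h3 : ((⌈C⌉₊ + 1 : ℕ) : ℝ) ≤ (T : ℝ) := Nat.cast_le.mpr h1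
      push_cast at h3; linarith
    -- a containing index exists
    have hex : ∃ i, N + 1 ≤ i ∧ T ≤ ℓ i := by
      refine ⟨N + 1 + M + 2 * T, by omega, ?_⟩
      set i0 := N + 1 + M + 2 * T with hi0
      obtain ⟨h2, -⟩ := hℓ i0 (by omega)
      have hpow : (i0 : ℝ) + 1 ≤ (2 : ℝ) ^ i0 := by
        have h := Nat.lt_two_pow_self (n := i0)
        have : (i0 : ℝ) < (2 : ℝ) ^ i0 := by exact_mod_cast h
        have h2' : ((i0 : ℝ) + 1) = ((i0 + 1 : ℕ) : ℝ) := by push_cast; ring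
        rw [h2']
        exact_mod_cast h
      have hT2 : (2 : ℝ) * T ≤ (i0 : ℝ) := by
        have : 2 * T ≤ i0 := by omega
        exact_mod_cast this
      have hps : (2 : ℝ) ^ (i0 + 1) = 2 * 2 ^ i0 := by ring
      have : (T : ℝ) ≤ (ℓ i0 : ℝ) := by nlinarith [h2, hpow, hT2, hδ4, hδ0]
      exact_mod_cast this
    obtain ⟨i, hiN, hiT, hmin⟩ :
        ∃ i, N + 1 ≤ i ∧ T ≤ ℓ i ∧ ∀ m, m < i → ¬(N + 1 ≤ m ∧ T ≤ ℓ m) :=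
      ⟨Nat.find hex, (Nat.find_spec hex).1, (Nat.find_spec hex).2,
        fun m hm => Nat.find_min hex hm⟩
    have hine : N + 1 < i := by
      rcases lt_or_ge (N + 1) i with h | h
      · exact h
      · have he : i = N + 1 := le_antisymm h hiN
        rw [he] at hiT; omega
    set j0 := i - 1 with hj0
    have hij : i = j0 + 1 := by omega
    have hNj0 : N + 1 ≤ j0 := by omega
    have hMj0 : M ≤ j0 := by omega
    have hlj0T : ℓ j0 < T := by
      by_contra hcon
      push_neg at hcon
      exact hmin j0 (by omega) ⟨by omega, hcon⟩
    have hiT' : T ≤ ℓ (j0 + 1) := by rw [← hij]; exact hiT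
    have hT0 : 0 < T := by omega
    have hcT : (cntL σ 0 T : ℝ) ≤ (1 / 2 - 7 * δ / 8) * T := by
      have hTpos : (0 : ℝ) < T := by exact_mod_cast hT0
      have hde : dens σ T = (cntL σ 0 T : ℝ) / T := by
        rw [dens, densBetween_eq]; norm_num
      rw [hde, div_lt_iff₀ hTpos] at hdT
      linarith
    have hp1 : (1 : ℝ) ≤ 2 ^ (j0 - 1) := one_le_pow₀ (by norm_num)
    have ej1 : (2 : ℝ) ^ (j0 + 1) = 4 * 2 ^ (j0 - 1) := by
      rw [show j0 + 1 = (j0 - 1) + 2 by omega]; ring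
    have ej2 : (2 : ℝ) ^ (j0 + 1 + 1) = 8 * 2 ^ (j0 - 1) := by
      rw [show j0 + 1 + 1 = (j0 - 1) + 3 by omega]; ring
    obtain ⟨hl1, hl2⟩ := hℓ j0 hMj0
    obtain ⟨hl3, hl4⟩ := hℓ (j0 + 1) (by omega)
    rw [ej1] at hl1 hl2
    rw [ej2] at hl3 hl4
    have hTlj : (ℓ j0 : ℝ) ≤ T := by exact_mod_cast le_of_lt hlj0T
    -- the anchor
    have hanchor : (cntL σ 0 (ℓ j0) : ℝ) ≤ (1 / 2 - δ / 2) * ℓ j0 := by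
      by_cases hcase : (ℓ j0 : ℝ) + δ * 2 ^ (j0 - 1) ≤ (T : ℝ)
      · have hsucc : ¬ densBetween σ (ℓ j0) T ≤ 1 / 2 - δ / 4 := by
          intro hle
          refine hbad i (by omega) ?_
          simp only [hgood]
          refine ⟨by omega, T, ?_, ?_, ?_⟩
          · rw [← hj0, show i - 2 = j0 - 1 by omega]; exact hcase
          · rw [hij]; exact hiT'
          · rw [← hj0]; exact hle
        push_neg at hsucc
        have hd : (0 : ℝ) < (T : ℝ) - ℓ j0 := by
          have : (ℓ j0 : ℝ) < T := by exact_mod_cast hlj0T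
          linarith
        rw [densBetween_eq, lt_div_iff₀ hd] at hsucc
        have hsplit : (cntL σ 0 T : ℝ) = cntL σ 0 (ℓ j0) + cntL σ (ℓ j0) T := by
          exact_mod_cast cntL_split σ (le_of_lt hlj0T)
        nlinarith [hsucc, hcT, hsplit, hTlj, hδ0, hδ4,
          mul_le_mul_of_nonneg_left hTlj hδ0.le,
          mul_nonneg hδ0.le (le_trans (Nat.cast_nonneg (ℓ j0)) hTlj)]
      · push_neg at hcase
        have hmono : (cntL σ 0 (ℓ j0) : ℝ) ≤ cntL σ 0 T := by
          have h := cntL_split σ (le_of_lt hlj0T)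
          have h2 : cntL σ 0 (ℓ j0) ≤ cntL σ 0 T := by omega
          exact_mod_cast h2
        have hkey : (cntL σ 0 (ℓ j0) : ℝ) ≤
            (1 / 2 - 7 * δ / 8) * ((ℓ j0 : ℝ) + δ * 2 ^ (j0 - 1)) :=
          le_trans hmono (le_trans hcT
            (mul_le_mul_of_nonneg_left hcase.le (by linarith)))
        have hh1 : δ * ((1 - δ) * (4 * 2 ^ (j0 - 1) - 1)) ≤ δ * (ℓ j0 : ℝ) :=
          mul_le_mul_of_nonneg_left hl1 hδ0.le
        have hh2 : δ * 1 ≤ δ * (2 : ℝ) ^ (j0 - 1) := mul_le_mul_of_nonneg_left hp1 hδ0.le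
        have hh3 : (0:ℝ) ≤ (δ * 2 ^ (j0 - 1)) * (1 / 4 - δ) :=
          mul_nonneg (mul_nonneg hδ0.le (by positivity)) (by linarith)
        nlinarith [hkey, hh1, hh2, hh3, hδ0, hδ4]
    -- descent
    have desc : ∀ d j, j + d = j0 → N ≤ j →
        (cntL σ 0 (ℓ j) : ℝ) ≤ (1 / 2 - δ / 2) * ℓ j - (δ / 4) * ((ℓ j0 : ℝ) - ℓ j) := by
      intro d
      induction d with
      | zero =>
        intro j hj _
        have hjj : j = j0 := by omega
        subst hjj
        simpa using hanchor
      | succ d ih =>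
        intro j hj hNj
        have hMj : M ≤ j := le_trans hMN hNj
        have h1 := ih (j + 1) (by omega) (by omega)
        have hgapj := gap j hMj
        have hnb : ¬ densBetween σ (ℓ j) (ℓ (j + 1)) ≤ 1 / 2 - δ / 4 := by
          intro hle
          refine hbad (j + 1) (by omega) ?_
          simp only [hgood]
          refine ⟨by omega, ℓ (j + 1), ?_, le_refl _, ?_⟩
          · rw [show j + 1 - 1 = j by omega, show j + 1 - 2 = j - 1 by omega]
            exact hgapj
          · rw [show j + 1 - 1 = j by omega]; exact hle
        push_neg at hnb
        have hpp : (0 : ℝ) < δ * 2 ^ (j - 1) := by positivity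
        have hjlt : (ℓ j : ℝ) < ℓ (j + 1) := by linarith
        have hjle : ℓ j ≤ ℓ (j + 1) := by exact_mod_cast hjlt.le
        have hd2 : (0 : ℝ) < (ℓ (j + 1) : ℝ) - ℓ j := by linarith
        rw [densBetween_eq, lt_div_iff₀ hd2] at hnb
        have hsplit : (cntL σ 0 (ℓ (j + 1)) : ℝ) = cntL σ 0 (ℓ j) + cntL σ (ℓ j) (ℓ (j + 1)) := by
          exact_mod_cast cntL_split σ hjle
        nlinarith [h1, hnb, hsplit]
    have hfin := desc (j0 - N) N (by omega) le_rfl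
    have hcN0 : (0 : ℝ) ≤ (cntL σ 0 (ℓ N) : ℝ) := by positivity
    have hlN1 : (1 : ℝ) ≤ (ℓ N : ℝ) := by exact_mod_cast hℓ_pos N
    have hCδ : 3 * δ * C = 20 * (δ + 4) * (ℓ N : ℝ) := by
      rw [hC]; field_simp
    have hstep1 : δ * (ℓ j0 : ℝ) ≤ 2 * (ℓ N : ℝ) := by
      nlinarith [hfin, hcN0, hδ4, hδ0, hlN1, mul_nonneg hδ0.le (le_trans zero_le_one hlN1)]
    have hTle : (T : ℝ) ≤ (ℓ (j0 + 1) : ℝ) := by exact_mod_cast hiT'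
    have hstep2 : (T : ℝ) ≤ 10 * 2 ^ (j0 - 1) := by
      nlinarith [hTle, hl4, hp1, hδ4, hδ0, mul_pos hδ0 (lt_of_lt_of_le one_pos hp1)]
    have hstep3 : (3 : ℝ) * 2 ^ (j0 - 1) - 1 ≤ (ℓ j0 : ℝ) := by
      nlinarith [hl1, hp1, hδ4, hδ0, mul_pos hδ0 (lt_of_lt_of_le one_pos hp1)]
    nlinarith [hstep1, hstep2, hstep3, hTC, hCδ, hδ0, hδ4, hlN1,
      mul_le_mul_of_nonneg_left hstep2 hδ0.le,
      mul_le_mul_of_nonneg_left hstep3 hδ0.le,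
      mul_le_mul_of_nonneg_left hTC hδ0.le,
      mul_nonneg hδ0.le (le_trans zero_le_one hlN1)]
  -- conclude
  have hinf : {i | good i}.Infinite := by
    apply Set.infinite_of_not_bddAbove
    rintro ⟨N, hN⟩
    obtain ⟨i, hi1, hi2⟩ := key (max N M) (le_max_right _ _)
    exact absurd (hN hi2) (by omega)
  refine ⟨fun i => if h : good i then h.2.choose else 0, hinf.mono ?_⟩
  intro i hi
  have h : good i := hi
  simp only [Set.mem_setOf_eq, dif_pos h]
  exact ⟨h.1, h.2.choose_spec.1, h.2.choose_spec.2.1, h.2.choose_spec.2.2⟩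
end Paper
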